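/- Let I be a finite subset of Fin n. Then in the Clifford algebra Cl = ℝ_{p,q}, the sum of e_J · e_I · e^J over ALL subsets J of Fin n equals 2^n · e_I if I = ∅, equals 2^n · e_I if I is all of Fin n and n is odd, and equals 0 in all other cases (i.e. when I is nonempty and proper, or when I = Fin n with n even). -/

import Mathlib

noncomputable section

/-- The weights of the quadratic form of signature `(p, q)`: `1` for the first `p`
coordinates and `-1` for the remaining ones. -/
def cliffordWeight (p : ℕ) {n : ℕ} (i : Fin n) : ℝ := if (i : ℕ) < p then 1 else -1

/-- The quadratic form of signature `(p, q)` on `Fin (p + q) → ℝ`. -/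
def cliffordQ (p q : ℕ) : QuadraticForm ℝ (Fin (p + q) → ℝ) :=
  QuadraticMap.weightedSumSquares ℝ (cliffordWeight p)

/-- The generator `e i` of the Clifford algebra `ℝ_{p,q}`. -/
def cliffordE (p q : ℕ) (i : Fin (p + q)) : CliffordAlgebra (cliffordQ p q) :=
  CliffordAlgebra.ι (cliffordQ p q) (Pi.single i 1)

/-- `e_J`: the product of the generators `e j` for `j ∈ J`, in increasing order. -/
def eLower (p q : ℕ) (J : Finset (Fin (p + q))) : CliffordAlgebra (cliffordQ p q) :=
  ((J.sort (· ≤ ·)).map (cliffordE p q)).prod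

/-- `e^J`: the product of the elements `w j • e j` for `j ∈ J`, in decreasing order. -/
def eUpper (p q : ℕ) (J : Finset (Fin (p + q))) : CliffordAlgebra (cliffordQ p q) :=
  ((J.sort (· ≤ ·)).reverse.map (fun j => cliffordWeight p j • cliffordE p q j)).prod

namespace SumProof

variable (p q : ℕ)

lemma weight_sq (i : Fin (p + q)) : cliffordWeight p i * cliffordWeight p i = 1 := by
  unfold cliffordWeight; split <;> norm_num

lemma Q_single (i : Fin (p + q)) : cliffordQ p q (Pi.single i 1) = cliffordWeight p i := by
  simp [cliffordQ, QuadraticMap.weightedSumSquares_apply, Pi.single_apply,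
    Finset.sum_ite_eq', mul_ite]

lemma e_mul_self (i : Fin (p + q)) :
    cliffordE p q i * cliffordE p q i = algebraMap ℝ _ (cliffordWeight p i) := by
  rw [cliffordE, CliffordAlgebra.ι_sq_scalar, Q_single]

lemma polar_single {i j : Fin (p + q)} (h : i ≠ j) :
    QuadraticMap.polar (cliffordQ p q) (Pi.single i 1) (Pi.single j 1) = 0 := by
  simp only [QuadraticMap.polar, cliffordQ, QuadraticMap.weightedSumSquares_apply]
  rw [← Finset.sum_sub_distrib, ← Finset.sum_sub_distrib]
  apply Finset.sum_eq_zero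
  intro k _
  rcases eq_or_ne k i with rfl | hi <;> rcases eq_or_ne k j with rfl | hj <;>
    simp_all [Pi.single_apply, Pi.add_apply]

lemma e_anticomm {i j : Fin (p + q)} (h : i ≠ j) :
    cliffordE p q i * cliffordE p q j = -(cliffordE p q j * cliffordE p q i) := by
  have H := CliffordAlgebra.ι_mul_ι_add_swap (Q := cliffordQ p q)
    (Pi.single i 1) (Pi.single j 1)
  rw [polar_single p q h, map_zero] at H
  rw [cliffordE, cliffordE]
  exact eq_neg_of_add_eq_zero_left H

/-- product of generators over a list -/
def prodE (l : List (Fin (p + q))) : CliffordAlgebra (cliffordQ p q) :=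
  (l.map (cliffordE p q)).prod

/-- product of weighted generators over the reverse of a list -/
def prodU (l : List (Fin (p + q))) : CliffordAlgebra (cliffordQ p q) :=
  (l.reverse.map (fun j => cliffordWeight p j • cliffordE p q j)).prod

lemma prodE_cons (j : Fin (p + q)) (l : List (Fin (p + q))) :
    prodE p q (j :: l) = cliffordE p q j * prodE p q l := by
  simp [prodE]

lemma prodU_cons (j : Fin (p + q)) (l : List (Fin (p + q))) :
    prodU p q (j :: l) = prodU p q l * (cliffordWeight p j • cliffordE p q j) := by
  simp [prodU]

lemma e_mul_prodE (j : Fin (p + q)) (l : List (Fin (p + q))) :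
    cliffordE p q j * prodE p q l =
      ((-1 : ℝ) ^ ((l.filter (· ≠ j)).length)) • (prodE p q l * cliffordE p q j) := by
  induction l with
  | nil => simp [prodE]
  | cons i l ih =>
    rw [prodE_cons, ← mul_assoc]
    rcases eq_or_ne i j with rfl | h
    · rw [mul_assoc, ih, mul_smul_comm, ← mul_assoc]
      congr 2
      simp [List.filter_cons]
    · rw [e_anticomm p q (Ne.symm h), neg_mul, mul_assoc, ih, mul_smul_comm, ← mul_assoc]
      have hl : (List.filter (fun x => decide (x ≠ j)) (i :: l)).length
          = (List.filter (fun x => decide (x ≠ j)) l).length + 1 := by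
        simp [List.filter_cons, h]
      rw [← neg_smul]
      congr 1
      rw [show ((i :: l).filter (· ≠ j)).length
          = (l.filter (· ≠ j)).length + 1 from hl, pow_succ]
      ring

lemma e_mul_weighted_self (j : Fin (p + q)) :
    cliffordE p q j * (cliffordWeight p j • cliffordE p q j) = 1 := by
  rw [mul_smul_comm, e_mul_self, Algebra.algebraMap_eq_smul_one, smul_smul, weight_sq, one_smul]

lemma conj_e (j : Fin (p + q)) (l : List (Fin (p + q))) :
    cliffordE p q j * prodE p q l * (cliffordWeight p j • cliffordE p q j) =
      ((-1 : ℝ) ^ ((l.filter (· ≠ j)).length)) • prodE p q l := by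
  rw [e_mul_prodE, smul_mul_assoc, mul_assoc, e_mul_weighted_self, mul_one]

lemma conj_list (l m : List (Fin (p + q))) :
    prodE p q l * prodE p q m * prodU p q l =
      ((-1 : ℝ) ^ ((l.map (fun j => (m.filter (· ≠ j)).length)).sum)) • prodE p q m := by
  induction l with
  | nil => simp [prodE, prodU]
  | cons j l ih =>
    rw [prodE_cons, prodU_cons, show cliffordE p q j * prodE p q l * prodE p q m *
        (prodU p q l * (cliffordWeight p j • cliffordE p q j))
      = cliffordE p q j * (prodE p q l * prodE p q m * prodU p q l) *
        (cliffordWeight p j • cliffordE p q j) by simp only [mul_assoc], ih,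
      mul_smul_comm _ (cliffordE p q j), smul_mul_assoc, conj_e, smul_smul,
      List.map_cons, List.sum_cons, pow_add]
    congr 1
    ring

lemma filter_sort_length (I : Finset (Fin (p + q))) (j : Fin (p + q)) :
    (((I.sort (· ≤ ·)).filter (· ≠ j)).length) = I.card - (if j ∈ I then 1 else 0) := by
  have hnd : (I.sort (· ≤ ·)).Nodup := I.sort_nodup _
  have hlen : (I.sort (· ≤ ·)).length = I.card := I.length_sort _
  rw [show (List.filter (fun x => decide (x ≠ j)) (I.sort (· ≤ ·)))
      = (I.sort (· ≤ ·)).erase j from by rw [List.Nodup.erase_eq_filter hnd]; congr 1; funext x; by_cases hx : x = j <;> simp [hx, bne, Bool.not_not]]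
  by_cases h : j ∈ I
  · rw [List.length_erase_of_mem (by simpa [Finset.mem_sort] using h), hlen]
    simp [h]
  · rw [List.erase_of_not_mem (by simpa [Finset.mem_sort] using h), hlen]
    simp [h]

lemma neg_one_pow_filter (I : Finset (Fin (p + q))) (j : Fin (p + q)) :
    ((-1 : ℝ) ^ (((I.sort (· ≤ ·)).filter (· ≠ j)).length)) =
      (if j ∈ I then -(-1 : ℝ) ^ I.card else (-1 : ℝ) ^ I.card) := by
  rw [filter_sort_length]
  by_cases h : j ∈ I
  · have hc : 1 ≤ I.card := Finset.card_pos.mpr ⟨j, h⟩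
    have hsub : I.card = (I.card - 1) + 1 := (Nat.sub_add_cancel hc).symm
    have h2 : -(-1 : ℝ) ^ I.card = (-1 : ℝ) ^ (I.card - 1) := by
      conv_lhs => rw [hsub]
      rw [pow_succ]; ring
    simp only [h, if_true, h2]
  · simp [h]

lemma conj_finset (I J : Finset (Fin (p + q))) :
    eLower p q J * eLower p q I * eUpper p q J =
      (∏ j ∈ J, (if j ∈ I then -(-1 : ℝ) ^ I.card else (-1 : ℝ) ^ I.card)) • eLower p q I := by
  have h := conj_list p q (J.sort (· ≤ ·)) (I.sort (· ≤ ·))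
  have hL : eLower p q J = prodE p q (J.sort (· ≤ ·)) := rfl
  have hU : eUpper p q J = prodU p q (J.sort (· ≤ ·)) := rfl
  have hI : eLower p q I = prodE p q (I.sort (· ≤ ·)) := rfl
  rw [hL, hU, hI, h]
  congr 1
  have hsum : ((J.sort (· ≤ ·)).map
        (fun j => (((I.sort (· ≤ ·)).filter (· ≠ j)).length))).sum
      = ∑ j ∈ J, (((I.sort (· ≤ ·)).filter (· ≠ j)).length) := by
    rw [← Finset.sum_map_toList]
    exact List.Perm.sum_eq (List.Perm.map _ (Finset.sort_perm_toList _ _))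
  rw [hsum, ← Finset.prod_pow_eq_pow_sum]
  exact Finset.prod_congr rfl fun j _ => neg_one_pow_filter p q I j

end SumProof

theorem sum_eLower_mul_eUpper (p q : ℕ) (I : Finset (Fin (p + q))) :
    ∑ J : Finset (Fin (p + q)), eLower p q J * eLower p q I * eUpper p q J =
      if I = ∅ ∨ (I = Finset.univ ∧ Odd (p + q)) then
        (2 ^ (p + q) : ℤ) • eLower p q I
      else 0 := by
  classical
  set g : Fin (p + q) → ℝ :=
    fun i => if i ∈ I then -(-1 : ℝ) ^ I.card else (-1 : ℝ) ^ I.card with hg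
  have step1 : ∑ J : Finset (Fin (p + q)), eLower p q J * eLower p q I * eUpper p q J
      = (∑ J : Finset (Fin (p + q)), ∏ j ∈ J, g j) • eLower p q I := by
    rw [Finset.sum_smul]
    exact Finset.sum_congr rfl fun J _ => SumProof.conj_finset p q I J
  have step2 : (∑ J : Finset (Fin (p + q)), ∏ j ∈ J, g j) = ∏ i, (g i + 1) := by
    rw [Finset.prod_add]
    simp [Finset.powerset_univ]
  rw [step1, step2]
  split_ifs with h
  · have hprod : ∏ i, (g i + 1) = 2 ^ (p + q) := by
      have hone : ∀ i, g i + 1 = 2 := by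
        intro i
        rcases h with rfl | ⟨rfl, hodd⟩
        · simp [hg]; norm_num
        · have hpow : (-1 : ℝ) ^ (p + q) = -1 := Odd.neg_one_pow hodd
          simp [hg, Finset.card_univ, hpow]; norm_num
      rw [Finset.prod_congr rfl fun i _ => hone i]
      simp [Finset.card_univ]
    rw [hprod]
    rw [← Int.cast_smul_eq_zsmul ℝ]
    norm_num
  · push_neg at h
    obtain ⟨hne, h2⟩ := h
    have hprod : ∏ i, (g i + 1) = 0 := by
      by_cases hc : Even I.card
      · obtain ⟨j, hj⟩ := hne
        refine Finset.prod_eq_zero (Finset.mem_univ j) ?_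
        simp [hg, hj, Even.neg_one_pow hc]
      · have hcodd : Odd I.card := Nat.odd_iff.mpr (Nat.not_even_iff.mp hc)
        have hIu : I ≠ Finset.univ := by
          intro hu
          rcases h2 hu with h3
          apply h3
          rw [hu, Finset.card_univ, Fintype.card_fin] at hcodd
          exact hcodd
        obtain ⟨j, hj⟩ : ∃ j, j ∉ I := by
          by_contra hall
          push_neg at hall
          exact hIu (Finset.eq_univ_iff_forall.mpr hall)
        refine Finset.prod_eq_zero (Finset.mem_univ j) ?_
        simp [hg, hj, Odd.neg_one_pow hcodd]
    rw [hprod, zero_smul]
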